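/- Under the GI/G/1-type setup with σ < 0, fix N ≥ 1 with σ_N < 0 and M ≥ 1, and set L = MN. Let V : [0,∞) → [1,∞) be increasing, convex and twice differentiable on (0,∞) with nondecreasing derivative V'. Suppose the following constants are fixed: (1) κ > 0 and ε ∈ (0,1) such that (1−ε)·Σ_{ℓ=−L}^{∞} ℓ·A_N^{*M}(ℓ)e + 2ε·Σ_{ℓ=0}^{∞} ℓ·A_N^{*M}(ℓ)e ≤ −2κ·e componentwise; (2) δ0 > 0 and an integer K0 ≥ L such that V'(k + δ0·k^{1−α}) ≤ (1+ε)·V'(k) and V'(k−L) ≥ (1−ε)·V'(k) for all integers k ≥ K0+1; (3) an integer K ≥ K0 such that (1/V'(k))·Σ_{ℓ=⌊δ0 k^{1−α}⌋+1}^{∞} V(k+ℓ)·A_N^{*M}(ℓ)e ≤ κ·e componentwise for all integers k ≥ K+1 (here α ∈ [0,1) is fixed). Then for all integers k ≥ K+1, Σ_{ℓ=0}^{∞} P_N^M(k;ℓ)·V(ℓ)·e − V(k)·e ≤ −κ·V'(k)·e componentwise, where P_N^M(k;ℓ) is the (k,ℓ) block of the M-th matrix power of P_N. -/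

import Mathlib

open Filter Set MeasureTheory

set_option maxHeartbeats 1600000

namespace MasuTrunc

/-- The state space `F = ℤ≥0 × {1,…,d}`. -/
abbrev S (d : ℕ) : Type := ℕ × Fin d

variable {d : ℕ}

/-- A (row-)stochastic matrix on `F`. -/
def IsStochastic (p : S d → S d → ℝ) : Prop :=
  (∀ s t, 0 ≤ p s t) ∧ ∀ s, HasSum (p s) 1

/-- Block monotonicity (`P ∈ BM_d`). -/
def BlockMonotone (p : S d → S d → ℝ) : Prop :=
  ∀ (k l : ℕ) (i j : Fin d),
    (∑' m : ℕ, p (k, i) (l + m, j)) ≤ ∑' m : ℕ, p (k + 1, i) (l + m, j)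

/-- Entries of the matrix power `P^n`. -/
noncomputable def matpow (p : S d → S d → ℝ) : ℕ → S d → S d → ℝ
  | 0 => fun s t => if s = t then (1 : ℝ) else 0
  | n + 1 => fun s t => ∑' u : S d, matpow p n s u * p u t

/-- Irreducibility of a countable-state transition matrix. -/
def ChainIrreducible (p : S d → S d → ℝ) : Prop :=
  ∀ s t : S d, ∃ n : ℕ, 0 < matpow p n s t

/-- Entries of the `n`-th power of a `d×d` matrix. -/
def finMatPow (Q : Fin d → Fin d → ℝ) : ℕ → Fin d → Fin d → ℝ
  | 0 => fun i j => if i = j then (1 : ℝ) else 0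
  | n + 1 => fun i j => ∑ r : Fin d, finMatPow Q n i r * Q r j

/-- `convZ F M` is the `M`-fold convolution of the family of `d×d` matrices
`{F(k); k ∈ ℤ}`. -/
noncomputable def convZ (F : ℤ → Fin d → Fin d → ℝ) : ℕ → ℤ → Fin d → Fin d → ℝ
  | 0 => fun k i j => if k = 0 ∧ i = j then (1 : ℝ) else 0
  | M + 1 => fun k i j => ∑' l : ℤ, ∑ r : Fin d, convZ F M (k - l) i r * F l r j

/-- The family `{A_N(k); k ∈ ℤ}`: `A_N(k) = 0` for `k < −N`,
`A_N(−N) = Ā(−N) = Σ_{m ≤ −N} A(m)`, and `A_N(k) = A(k)` for `k ≥ −N+1`. -/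
noncomputable def ANfam (A : ℤ → Fin d → Fin d → ℝ) (N : ℕ) :
    ℤ → Fin d → Fin d → ℝ :=
  fun k i j =>
    if k < -(N : ℤ) then 0
    else if k = -(N : ℤ) then ∑' m : ℕ, A (-(N : ℤ) - (m : ℤ)) i j
    else A k i j

/-- The modified GI/G/1-type transition matrix `P_N` with blocks
`P_N(0;ℓ) = B(ℓ)`, `P_N(k;0) = Ā(−k)` for `1 ≤ k ≤ N` (and `0` for `k > N`),
and `P_N(k;ℓ) = A_N(ℓ−k)` for `k, ℓ ≥ 1`. -/
noncomputable def PNmat (A : ℤ → Fin d → Fin d → ℝ)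
    (Bm : ℕ → Fin d → Fin d → ℝ) (N : ℕ) : S d → S d → ℝ
  | (0, i), (l, j) => Bm l i j
  | (k + 1, i), (0, j) =>
      if k + 1 ≤ N then ∑' m : ℕ, A (-((k : ℤ) + 1) - (m : ℤ)) i j else 0
  | (k + 1, i), (l + 1, j) => ANfam A N ((l : ℤ) - (k : ℤ)) i j

lemma PNmat_zero' {A : ℤ → Fin d → Fin d → ℝ} {Bm : ℕ → Fin d → Fin d → ℝ}
    {N : ℕ} (l : ℕ) (i j : Fin d) : PNmat A Bm N (0, i) (l, j) = Bm l i j := rfl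

lemma PNmat_succ_zero {A : ℤ → Fin d → Fin d → ℝ} {Bm : ℕ → Fin d → Fin d → ℝ}
    {N : ℕ} (k : ℕ) (i j : Fin d) :
    PNmat A Bm N (k + 1, i) (0, j)
      = if k + 1 ≤ N then ∑' m : ℕ, A (-((k : ℤ) + 1) - (m : ℤ)) i j else 0 := rfl

lemma PNmat_succ_succ {A : ℤ → Fin d → Fin d → ℝ} {Bm : ℕ → Fin d → Fin d → ℝ}
    {N : ℕ} (k l : ℕ) (i j : Fin d) :
    PNmat A Bm N (k + 1, i) (l + 1, j) = ANfam A N ((l : ℤ) - (k : ℤ)) i j := rfl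

/-! ### generic helpers -/

lemma inj_tsum_eq {α β : Type*} {f : β → ℝ} (g : α → β) (hg : Function.Injective g)
    (h0 : ∀ b, b ∉ Set.range g → f b = 0) : ∑' a, f (g a) = ∑' b, f b :=
  hg.tsum_eq (fun b hb => by
    by_contra hbr
    exact hb (h0 b hbr))

lemma hasSum_prod_fin {β : Type*} [Fintype β] {f : ℕ × β → ℝ} {a : β → ℝ}
    (h : ∀ b, HasSum (fun n => f (n, b)) (a b)) :
    HasSum f (∑ b, a b) := by
  classical
  have key : ∀ b : β, HasSum (fun x : ℕ × β => if x.2 = b then f (x.1, b) else 0) (a b) := by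
    intro b
    have hinj : Function.Injective (fun n : ℕ => ((n, b) : ℕ × β)) := by
      intro m n hmn; simpa using congrArg Prod.fst hmn
    have h0 : ∀ x : ℕ × β, x ∉ Set.range (fun n : ℕ => ((n, b) : ℕ × β)) →
        (if x.2 = b then f (x.1, b) else 0) = 0 := by
      rintro ⟨n, b'⟩ hx
      have : b' ≠ b := by
        intro hb; exact hx ⟨n, by simp [hb]⟩
      simp [this]
    refine (Function.Injective.hasSum_iff hinj h0).1 ?_
    have hb := h b
    convert hb using 1
    funext n
    simp [Function.comp]
  have := hasSum_sum (s := Finset.univ) (f := fun b (x : ℕ × β) => if x.2 = b then f (x.1, b) else 0)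
    (a := a) (fun b _ => key b)
  convert this using 2 with x
  rcases x with ⟨n, b⟩
  simp

lemma hasSum_markov_step {p : S d → S d → ℝ} (hpn : ∀ s t, 0 ≤ p s t)
    (hps : ∀ s, HasSum (p s) 1) {a : S d → ℝ} (han : ∀ s, 0 ≤ a s)
    (ha : HasSum a 1) : HasSum (fun t => ∑' u, a u * p u t) 1 := by
  set G : S d × S d → ℝ := fun x => a x.1 * p x.1 x.2 with hG
  have hGnn : ∀ x, 0 ≤ G x := fun x => mul_nonneg (han _) (hpn _ _)
  have hfib : ∀ u, HasSum (fun t => G (u, t)) (a u) := by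
    intro u; simpa using (hps u).mul_left (a u)
  have hGsum : Summable G := by
    rw [summable_prod_of_nonneg hGnn]
    refine ⟨fun u => (hfib u).summable, ?_⟩
    have : (fun u => ∑' t, G (u, t)) = a := funext fun u => (hfib u).tsum_eq
    rw [this]; exact ha.summable
  have hG1 : HasSum G 1 := by
    have h1 := hGsum.hasSum
    have h2 : HasSum a (∑' x, G x) := h1.prod_fiberwise hfib
    rwa [← ha.unique h2] at h1
  have hGs : HasSum (fun x : S d × S d => G x.swap) 1 := by
    have := (Equiv.prodComm (S d) (S d)).hasSum_iff (f := G) (a := 1)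
    exact this.2 hG1
  have hfib2 : ∀ t, HasSum (fun u => G (u, t)) (∑' u, a u * p u t) := by
    intro t
    have : Summable (fun u => G (u, t)) := by
      have := hGsum.prod_symm.comp_injective
        (i := fun u : S d => ((t, u) : S d × S d)) (fun u v huv => by
          simpa using congrArg Prod.snd huv)
      exact this
    simpa [hG] using this.hasSum
  exact hGs.prod_fiberwise hfib2

lemma matpow_nonneg {p : S d → S d → ℝ} (hpn : ∀ s t, 0 ≤ p s t) :
    ∀ (n : ℕ) (s t : S d), 0 ≤ matpow p n s t := by
  intro n
  induction n with
  | zero => intro s t; simp only [matpow]; split <;> norm_num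
  | succ n ih =>
    intro s t
    exact tsum_nonneg fun u => mul_nonneg (ih s u) (hpn u t)

lemma matpow_hasSum {p : S d → S d → ℝ} (hpn : ∀ s t, 0 ≤ p s t)
    (hps : ∀ s, HasSum (p s) 1) :
    ∀ (n : ℕ) (s : S d), HasSum (matpow p n s) 1 := by
  intro n
  induction n with
  | zero =>
    intro s
    have : (matpow p 0 s) = fun t => if t = s then (1:ℝ) else 0 := by
      funext t; simp only [matpow]; by_cases h : s = t <;> simp [h, eq_comm]
    rw [this]; exact hasSum_ite_eq s 1
  | succ n ih =>
    intro s
    exact hasSum_markov_step hpn hps (fun u => matpow_nonneg hpn n s u) (ih s)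


lemma ANfam_nonneg {A : ℤ → Fin d → Fin d → ℝ} (hAnn : ∀ k i j, 0 ≤ A k i j)
    (N : ℕ) (k : ℤ) (i j : Fin d) : 0 ≤ ANfam A N k i j := by
  unfold ANfam
  split
  · rfl
  · split
    · exact tsum_nonneg fun m => hAnn _ _ _
    · exact hAnn _ _ _

lemma ANfam_eq_zero {A : ℤ → Fin d → Fin d → ℝ} {N : ℕ} {k : ℤ}
    (hk : k < -(N : ℤ)) (i j : Fin d) : ANfam A N k i j = 0 := by
  unfold ANfam; rw [if_pos hk]

lemma ANfam_eq_A {A : ℤ → Fin d → Fin d → ℝ} {N : ℕ} {k : ℤ}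
    (hk : -(N : ℤ) < k) (i j : Fin d) : ANfam A N k i j = A k i j := by
  unfold ANfam
  rw [if_neg (by omega), if_neg (by omega)]

lemma PNmat_nonneg {A : ℤ → Fin d → Fin d → ℝ} {Bm : ℕ → Fin d → Fin d → ℝ}
    (hAnn : ∀ k i j, 0 ≤ A k i j) (hBnn : ∀ l i j, 0 ≤ Bm l i j) (N : ℕ) :
    ∀ s t : S d, 0 ≤ PNmat A Bm N s t := by
  rintro ⟨(_ | k), i⟩ ⟨(_ | l), j⟩
  · exact hBnn _ _ _
  · exact hBnn _ _ _
  · show (0:ℝ) ≤ if k + 1 ≤ N then _ else 0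
    split
    · exact tsum_nonneg fun m => hAnn _ _ _
    · rfl
  · exact ANfam_nonneg hAnn N _ i j

lemma convZ_nonneg {F : ℤ → Fin d → Fin d → ℝ} (hF : ∀ k i j, 0 ≤ F k i j) :
    ∀ (m : ℕ) (k : ℤ) (i j : Fin d), 0 ≤ convZ F m k i j := by
  intro m
  induction m with
  | zero =>
    intro k i j; simp only [convZ]; split <;> norm_num
  | succ m ih =>
    intro k i j
    exact tsum_nonneg fun l => Finset.sum_nonneg fun r _ =>
      mul_nonneg (ih _ i r) (hF _ r j)

lemma convZ_eq_zero {F : ℤ → Fin d → Fin d → ℝ} {N : ℕ}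
    (hF : ∀ k : ℤ, k < -(N : ℤ) → ∀ i j, F k i j = 0) :
    ∀ (m : ℕ) (k : ℤ), k < -((m * N : ℕ) : ℤ) → ∀ i j, convZ F m k i j = 0 := by
  intro m
  induction m with
  | zero =>
    intro k hk i j
    simp only [Nat.zero_mul, Nat.cast_zero, neg_zero] at hk
    simp only [convZ]
    rw [if_neg (by rintro ⟨rfl, -⟩; omega)]
  | succ m ih =>
    intro k hk i j
    show (∑' l : ℤ, ∑ r : Fin d, convZ F m (k - l) i r * F l r j) = 0
    have : ∀ l : ℤ, (∑ r : Fin d, convZ F m (k - l) i r * F l r j) = 0 := by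
      intro l
      by_cases hl : l < -(N : ℤ)
      · exact Finset.sum_eq_zero fun r _ => by rw [hF l hl, mul_zero]
      · refine Finset.sum_eq_zero fun r _ => ?_
        have hmn : ((m+1)*N : ℕ) = m*N + N := by ring
        rw [hmn] at hk
        rw [ih (k - l) (by push_cast at hk ⊢; omega) i r, zero_mul]
    rw [tsum_congr this, tsum_zero]


section Rows

variable {A : ℤ → Fin d → Fin d → ℝ} {Bm : ℕ → Fin d → Fin d → ℝ}
  {p : S d → S d → ℝ}

lemma summable_A_shift (hAnn : ∀ k i j, 0 ≤ A k i j)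
    (hpA : ∀ (k l : ℕ) (i j : Fin d),
      p (k + 1, i) (l + 1, j) = A ((l : ℤ) - (k : ℤ)) i j)
    (hpnn : ∀ s t, 0 ≤ p s t) (hps : ∀ s, HasSum (p s) 1)
    (i j : Fin d) (q0 : ℤ) :
    Summable (fun m : ℕ => A (q0 - (m : ℤ)) i j) := by
  apply summable_of_sum_range_le (c := 1) (fun m => hAnn _ _ _)
  intro n
  set k : ℕ := n + (-q0).toNat with hk
  have hkq : ∀ m : ℕ, m < n → (0 : ℤ) ≤ (k : ℤ) + q0 - m := by
    intro m hm
    have : (k : ℤ) = (n : ℤ) + (-q0).toNat := by exact_mod_cast rfl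
    rw [this]; omega
  have hentry : ∀ m ∈ Finset.range n,
      A (q0 - (m : ℤ)) i j = p (k + 1, i) (((k : ℤ) + q0 - m).toNat + 1, j) := by
    intro m hm
    rw [hpA]
    congr 1
    have h0 := hkq m (Finset.mem_range.1 hm)
    rw [Int.toNat_of_nonneg h0]
    ring
  rw [Finset.sum_congr rfl hentry]
  have hinj : ∀ x ∈ Finset.range n, ∀ y ∈ Finset.range n,
      (((((k : ℤ) + q0 - x).toNat + 1 : ℕ), j) : S d)
        = ((((k : ℤ) + q0 - y).toNat + 1 : ℕ), j) → x = y := by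
    intro x hx y hy hxy
    have h1 := congrArg Prod.fst hxy
    simp only at h1
    have hx0 := hkq x (Finset.mem_range.1 hx)
    have hy0 := hkq y (Finset.mem_range.1 hy)
    omega
  calc ∑ m ∈ Finset.range n, p (k + 1, i) (((k : ℤ) + q0 - m).toNat + 1, j)
      = ∑ t ∈ (Finset.range n).image
          (fun m : ℕ => (((((k : ℤ) + q0 - m).toNat + 1 : ℕ), j) : S d)), p (k + 1, i) t := by
        rw [Finset.sum_image hinj]
    _ ≤ 1 := sum_le_hasSum _ (fun t _ => hpnn _ _) (hps (k + 1, i))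

lemma summable_A_int (hAnn : ∀ k i j, 0 ≤ A k i j)
    (hpA : ∀ (k l : ℕ) (i j : Fin d),
      p (k + 1, i) (l + 1, j) = A ((l : ℤ) - (k : ℤ)) i j)
    (hpnn : ∀ s t, 0 ≤ p s t) (hps : ∀ s, HasSum (p s) 1)
    (i j : Fin d) : Summable (fun q : ℤ => A q i j) := by
  apply Summable.of_nat_of_neg
  · apply summable_of_sum_range_le (c := 1) (fun m => hAnn _ _ _)
    intro n
    have hentry : ∀ l ∈ Finset.range n, A (l : ℤ) i j = p (1, i) (l + 1, j) := by
      intro l hl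
      rw [hpA 0 l]
      norm_num
    rw [Finset.sum_congr rfl hentry]
    have hinj : ∀ x ∈ Finset.range n, ∀ y ∈ Finset.range n,
        ((x + 1 : ℕ), j) = (((y + 1 : ℕ), j) : S d) → x = y := by
      intro x _ y _ hxy
      have := congrArg Prod.fst hxy
      simpa using this
    calc ∑ l ∈ Finset.range n, p (1, i) (l + 1, j)
        = ∑ t ∈ (Finset.range n).image (fun l => (((l + 1 : ℕ), j) : S d)), p (1, i) t := by
          rw [Finset.sum_image hinj]
      _ ≤ 1 := sum_le_hasSum _ (fun t _ => hpnn _ _) (hps (1, i))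
  · have := summable_A_shift hAnn hpA hpnn hps i j 0
    simpa using this

lemma PNrow_hasSum (hAnn : ∀ k i j, 0 ≤ A k i j)
    (hpB : ∀ (l : ℕ) (i j : Fin d), p (0, i) (l, j) = Bm l i j)
    (hp0 : ∀ (k : ℕ) (i j : Fin d),
      p (k + 1, i) (0, j) = ∑' m : ℕ, A (-((k : ℤ) + 1) - (m : ℤ)) i j)
    (hpA : ∀ (k l : ℕ) (i j : Fin d),
      p (k + 1, i) (l + 1, j) = A ((l : ℤ) - (k : ℤ)) i j)
    (hpnn : ∀ s t, 0 ≤ p s t) (hps : ∀ s, HasSum (p s) 1)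
    (N : ℕ) (hN : 1 ≤ N) :
    ∀ s : S d, HasSum (PNmat A Bm N s) 1 := by
  rintro ⟨(_ | k), i⟩
  · have hrow : PNmat A Bm N (0, i) = p (0, i) := by
      funext t; rcases t with ⟨l, j⟩
      show Bm l i j = _
      rw [hpB]
    rw [hrow]; exact hps _
  by_cases hkN : k + 1 ≤ N
  · have hrow : PNmat A Bm N (k + 1, i) = p (k + 1, i) := by
      funext t; rcases t with ⟨(_ | l), j⟩
      · show (if k + 1 ≤ N then ∑' m : ℕ, A (-((k : ℤ) + 1) - (m : ℤ)) i j else 0) = _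
        rw [if_pos hkN, hp0]
      · show ANfam A N ((l : ℤ) - (k : ℤ)) i j = _
        rw [ANfam_eq_A (by omega), hpA]
    rw [hrow]; exact hps _
  · -- main case : N ≤ k
    have hNk : N ≤ k := by omega
    set fA : Fin d → ℤ → ℝ := fun j q => A q i j with hfAdef
    have hfAnn : ∀ j q, 0 ≤ fA j q := fun j q => hAnn _ _ _
    have hfAs : ∀ j, Summable (fA j) := fun j => summable_A_int hAnn hpA hpnn hps i j
    set s : Fin d → ℝ := fun j => ∑' q, fA j q with hsdef
    -- summable indicator helper
    have hind : ∀ (j : Fin d) (P : ℤ → Prop) [DecidablePred P],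
        Summable (fun q : ℤ => if P q then fA j q else 0) := by
      intro j P _
      refine Summable.of_nonneg_of_le (fun q => ?_) (fun q => ?_) (hfAs j)
      · split <;> [exact hfAnn j q; rfl]
      · split <;> [rfl; exact hfAnn j q]
    -- p-row fibers sum to s j
    have hpfib : ∀ j, HasSum (fun l : ℕ => p (k + 1, i) (l, j)) (s j) := by
      intro j
      have hrowS : Summable (fun l : ℕ => p (k + 1, i) (l, j)) := by
        have := (hps (k + 1, i)).summable.comp_injective
          (i := fun l : ℕ => ((l, j) : S d))
          (fun a b hab => by simpa using congrArg Prod.fst hab)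
        exact this
      have h01 : p (k + 1, i) (0, j) = ∑' q : ℤ, (if q ≤ -(k : ℤ) - 1 then fA j q else 0) := by
        rw [hp0]
        have heq := inj_tsum_eq (f := fun q : ℤ => if q ≤ -(k : ℤ) - 1 then fA j q else 0)
          (fun m : ℕ => -(k : ℤ) - 1 - m)
          (fun a b hab => by
            have : -(k : ℤ) - 1 - a = -(k : ℤ) - 1 - b := hab
            omega)
          (fun q hq => if_neg fun hqle => hq ⟨(-(k : ℤ) - 1 - q).toNat, by beta_reduce; omega⟩)
        rw [← heq]
        refine tsum_congr fun m => ?_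
        beta_reduce
        rw [if_pos (by omega : -(k:ℤ) - 1 - (m:ℤ) ≤ -(k : ℤ) - 1)]
        show A _ i j = A _ i j
        congr 1
        ring
      have h02 : (∑' l : ℕ, p (k + 1, i) (l + 1, j))
          = ∑' q : ℤ, (if -(k : ℤ) ≤ q then fA j q else 0) := by
        have heq : (fun l : ℕ => p (k + 1, i) (l + 1, j))
            = fun l : ℕ => (if -(k : ℤ) ≤ (l : ℤ) - k then fA j ((l : ℤ) - k) else 0) := by
          funext l
          rw [hpA, if_pos (by omega)]
        rw [heq]
        exact inj_tsum_eq (f := fun q : ℤ => if -(k : ℤ) ≤ q then fA j q else 0)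
          (fun l : ℕ => (l : ℤ) - k)
          (fun a b hab => by
            have : (a : ℤ) - k = (b : ℤ) - k := hab
            omega)
          (fun q hq => if_neg fun hqle => hq ⟨(q + k).toNat, by beta_reduce; omega⟩)
      have h03 : (∑' q : ℤ, (if q ≤ -(k : ℤ) - 1 then fA j q else 0))
          + (∑' q : ℤ, (if -(k : ℤ) ≤ q then fA j q else 0)) = s j := by
        rw [← Summable.tsum_add (hind j _) (hind j _)]
        refine tsum_congr fun q => ?_
        by_cases hq : q ≤ -(k : ℤ) - 1
        · rw [if_pos hq, if_neg (by omega), add_zero]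
        · rw [if_neg hq, if_pos (by omega), zero_add]
      have htot : (∑' l : ℕ, p (k + 1, i) (l, j)) = s j := by
        rw [Summable.tsum_eq_zero_add hrowS, h01, h02, h03]
      exact htot ▸ hrowS.hasSum
    have hsum1 : (∑ j, s j) = 1 :=
      ((hasSum_prod_fin hpfib).unique (hps (k + 1, i)))
    -- ANfam rows sum to s j
    have hANrow : ∀ j, HasSum (fun q : ℤ => ANfam A N q i j) (s j) := by
      intro j
      set s1 : ℝ := ∑' q : ℤ, (if q ≤ -(N : ℤ) then fA j q else 0) with hs1def
      set s2 : ℝ := ∑' q : ℤ, (if -(N : ℤ) < q then fA j q else 0) with hs2def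
      have htv : (∑' m : ℕ, A (-(N : ℤ) - (m : ℤ)) i j) = s1 := by
        rw [hs1def]
        rw [← inj_tsum_eq (f := fun q : ℤ => if q ≤ -(N : ℤ) then fA j q else 0)
          (fun m : ℕ => -(N : ℤ) - m)
          (fun a b hab => by
            have : -(N : ℤ) - a = -(N : ℤ) - b := hab
            omega)
          (fun q hq => if_neg fun hqle => hq ⟨(-(N : ℤ) - q).toNat, by beta_reduce; omega⟩)]
        refine tsum_congr fun m => ?_
        beta_reduce
        rw [if_pos (by omega : -(N:ℤ) - (m:ℤ) ≤ -(N : ℤ))]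
      have hval : ∀ q, ANfam A N q i j
          = (if q = -(N : ℤ) then s1 else 0) + (if -(N : ℤ) < q then fA j q else 0) := by
        intro q
        unfold ANfam
        rcases lt_trichotomy q (-(N : ℤ)) with h | h | h
        · rw [if_pos h, if_neg (by omega), if_neg (by omega)]; ring
        · rw [if_neg (by omega), if_pos h, if_pos h, if_neg (by omega), htv, add_zero]
        · rw [if_neg (by omega), if_neg (by omega), if_neg (by omega), if_pos h, zero_add]
      have hsum12 : s1 + s2 = s j := by
        rw [hs1def, hs2def, ← Summable.tsum_add (hind j _) (hind j _)]
        refine tsum_congr fun q => ?_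
        by_cases hq : q ≤ -(N : ℤ)
        · rw [if_pos hq, if_neg (by omega), add_zero]
        · rw [if_neg hq, if_pos (by omega), zero_add]
      have hadd := HasSum.add (hasSum_ite_eq (-(N : ℤ)) s1) (hind j (fun q => -(N : ℤ) < q)).hasSum
      rw [← hs2def, hsum12] at hadd
      have hfun : (fun q : ℤ => ANfam A N q i j)
          = fun q => (if q = -(N : ℤ) then s1 else 0)
              + (if -(N : ℤ) < q then fA j q else 0) := funext hval
      rw [hfun]
      exact hadd
    -- PN row fibers
    have hPNfib : ∀ j, HasSum (fun l : ℕ => PNmat A Bm N (k + 1, i) (l, j)) (s j) := by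
      intro j
      have h1 := (Function.Injective.hasSum_iff
          (f := fun q : ℤ => ANfam A N q i j)
          (g := fun l : ℕ => (l : ℤ) - k)
          (fun a b hab => by
            have : (a : ℤ) - k = (b : ℤ) - k := hab
            omega)
          (fun q hq => by
            refine ANfam_eq_zero ?_ i j
            have : q < -(k : ℤ) := by
              by_contra hc
              exact hq ⟨(q + k).toNat, by beta_reduce; omega⟩
            omega)).2 (hANrow j)
      have h2 : HasSum (fun l : ℕ => PNmat A Bm N (k + 1, i) (l + 1, j)) (s j) := by
        have hfeq : (fun l : ℕ => PNmat A Bm N (k + 1, i) (l + 1, j))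
            = fun l : ℕ => ANfam A N ((l : ℤ) - (k : ℤ)) i j :=
          funext fun l => PNmat_succ_succ k l i j
        rw [hfeq]
        exact h1
      have h3 := (hasSum_nat_add_iff (f := fun l : ℕ => PNmat A Bm N (k + 1, i) (l, j)) 1).1 h2
      have h4 : PNmat A Bm N (k + 1, i) (0, j) = 0 := by
        rw [PNmat_succ_zero, if_neg hkN]
      simpa [h4] using h3
    have := hasSum_prod_fin hPNfib
    rwa [hsum1] at this

end Rows

lemma PN_le_one {A : ℤ → Fin d → Fin d → ℝ} {Bm : ℕ → Fin d → Fin d → ℝ} {N : ℕ}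
    (hPnn : ∀ s t : S d, 0 ≤ PNmat A Bm N s t)
    (hPps : ∀ s : S d, HasSum (PNmat A Bm N s) 1)
    (s t : S d) : PNmat A Bm N s t ≤ 1 :=
  le_hasSum (hPps s) t (fun u _ => hPnn s u)

lemma matpow_eq_convZ {A : ℤ → Fin d → Fin d → ℝ} {Bm : ℕ → Fin d → Fin d → ℝ}
    {N : ℕ} (hN : 1 ≤ N)
    (hAnn : ∀ k i j, 0 ≤ A k i j)
    (hPnn : ∀ s t : S d, 0 ≤ PNmat A Bm N s t)
    (hPps : ∀ s : S d, HasSum (PNmat A Bm N s) 1) :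
    ∀ (m : ℕ) (k : ℕ), m * N + 1 ≤ k → ∀ (l : ℕ) (i j : Fin d),
      matpow (PNmat A Bm N) m (k, i) (l, j)
        = convZ (ANfam A N) m ((l : ℤ) - (k : ℤ)) i j := by
  have hFzero : ∀ q : ℤ, q < -(N : ℤ) → ∀ i j : Fin d, ANfam A N q i j = 0 :=
    fun q hq i j => ANfam_eq_zero hq i j
  intro m
  induction m with
  | zero =>
    intro k hk l i j
    show (if ((k, i) : S d) = (l, j) then (1:ℝ) else 0)
      = (if ((l : ℤ) - k = 0 ∧ i = j) then (1:ℝ) else 0)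
    by_cases h : k = l ∧ i = j
    · rw [if_pos (by simp [h.1, h.2]), if_pos ⟨by simp [h.1], h.2⟩]
    · rw [if_neg, if_neg]
      · intro hc
        exact h ⟨by omega, hc.2⟩
      · intro hc
        rw [Prod.mk.injEq] at hc
        exact h hc
  | succ m ih =>
    intro k hk l i j
    have hmN : (m + 1) * N = m * N + N := by ring
    have hkm : m * N + 1 ≤ k := by omega
    have hkgt : (m * N : ℤ) < k := by
      have : m * N + 1 ≤ k := hkm
      exact_mod_cast (by omega : (m * N : ℕ) < k)
    -- summability of the step family
    have hrow := matpow_hasSum hPnn hPps m (k, i)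
    have hstep_nn : ∀ u : S d, 0 ≤ matpow (PNmat A Bm N) m (k, i) u * PNmat A Bm N u (l, j) :=
      fun u => mul_nonneg (matpow_nonneg hPnn m _ _) (hPnn _ _)
    have hstep_sum : Summable (fun u : S d =>
        matpow (PNmat A Bm N) m (k, i) u * PNmat A Bm N u (l, j)) := by
      refine Summable.of_nonneg_of_le hstep_nn (fun u => ?_) hrow.summable
      exact mul_le_of_le_one_right (matpow_nonneg hPnn m _ _) (PN_le_one hPnn hPps u (l, j))
    show (∑' u : S d, matpow (PNmat A Bm N) m (k, i) u * PNmat A Bm N u (l, j)) = _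
    rw [Summable.tsum_prod' hstep_sum (fun u => (hstep_sum.comp_injective
      (i := fun r : Fin d => ((u, r) : S d))
      (fun a b hab => by simpa using congrArg Prod.snd hab)))]
    -- G on ℤ
    set G : ℤ → ℝ := fun v => ∑ r : Fin d,
      convZ (ANfam A N) m (v - k) i r * ANfam A N ((l : ℤ) - v) r j with hGdef
    have hfib : ∀ u : ℕ,
        (∑' r : Fin d, matpow (PNmat A Bm N) m (k, i) (u, r) * PNmat A Bm N (u, r) (l, j))
          = G (u : ℤ) := by
      intro u
      rw [tsum_fintype]
      simp only [hGdef]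
      by_cases hu : ((u : ℤ) - k) < -((m * N : ℕ) : ℤ)
      · -- both sides vanish via the convZ factor
        have hL : (∑ r : Fin d, matpow (PNmat A Bm N) m (k, i) (u, r)
            * PNmat A Bm N (u, r) (l, j)) = 0 :=
          Finset.sum_eq_zero fun r _ => by
            rw [ih k hkm u i r, convZ_eq_zero hFzero m _ hu, zero_mul]
        have hR : (∑ r : Fin d, convZ (ANfam A N) m ((u : ℤ) - k) i r
            * ANfam A N ((l : ℤ) - u) r j) = 0 :=
          Finset.sum_eq_zero fun r _ => by
            rw [convZ_eq_zero hFzero m _ hu, zero_mul]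
        rw [hL, hR]
      · -- here u ≥ k - m N ≥ N + 1
        push_cast at hu
        have huN : N + 1 ≤ u := by
          have h1 : ((m * N : ℕ) : ℤ) ≤ m * N := by push_cast; omega
          have : (N : ℤ) + 1 ≤ (u : ℤ) := by push_cast at hk ⊢; omega
          exact_mod_cast this
        obtain ⟨u', rfl⟩ : ∃ u', u = u' + 1 := ⟨u - 1, by omega⟩
        refine Finset.sum_congr rfl (fun r _ => ?_)
        rw [ih k hkm (u' + 1) i r]
        congr 1
        rcases l with _ | l'
        · rw [PNmat_succ_zero, if_neg (by omega),
            ANfam_eq_zero (by push_cast; omega) r j]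
        · rw [PNmat_succ_succ]
          congr 1
          push_cast
          ring
    rw [tsum_congr hfib]
    have hstep1 : (∑' u : ℕ, G (u : ℤ)) = ∑' v : ℤ, G v := by
      refine inj_tsum_eq (fun u : ℕ => (u : ℤ)) (fun a b hab => by have : (a:ℤ) = b := hab; exact_mod_cast this) (fun v hv => ?_)
      have hvneg : v < 0 := by
        by_contra hc
        exact hv ⟨v.toNat, by beta_reduce; omega⟩
      simp only [hGdef]
      refine Finset.sum_eq_zero fun r _ => ?_
      rw [convZ_eq_zero hFzero m _ (by push_cast; omega), zero_mul]
    rw [hstep1]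
    rw [← (Equiv.subLeft (l : ℤ)).tsum_eq G]
    show _ = (∑' w : ℤ, ∑ r : Fin d,
      convZ (ANfam A N) m (((l : ℤ) - k) - w) i r * ANfam A N w r j)
    refine tsum_congr fun w => ?_
    simp only [hGdef, Equiv.subLeft_apply]
    refine Finset.sum_congr rfl fun r _ => ?_
    congr 2
    · ring
    · ring

section Deriv

variable {V : ℝ → ℝ}

lemma slope_mvt (hVd1 : ∀ x : ℝ, 0 < x → DifferentiableAt ℝ V x)
    {a b : ℝ} (ha : 0 < a) (hab : a < b) :
    ∃ ξ ∈ Ioo a b, V b - V a = deriv V ξ * (b - a) := by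
  obtain ⟨ξ, hξ, heq⟩ := exists_deriv_eq_slope V hab
    (fun y hy => (hVd1 y (lt_of_lt_of_le ha hy.1)).continuousAt.continuousWithinAt)
    (fun y hy => (hVd1 y (lt_trans ha hy.1)).differentiableWithinAt)
  refine ⟨ξ, hξ, ?_⟩
  rw [heq, div_mul_cancel₀ _ (sub_ne_zero.mpr (ne_of_gt hab))]

lemma derivV_nonneg (hVmono : StrictMonoOn V (Ici 0))
    (hVd1 : ∀ x : ℝ, 0 < x → DifferentiableAt ℝ V x)
    (hV'mono : MonotoneOn (deriv V) (Ioi 0)) {x : ℝ} (hx : 0 < x) :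
    0 ≤ deriv V x := by
  obtain ⟨ξ, hξ, heq⟩ := slope_mvt hVd1 (half_pos hx) (half_lt_self hx)
  have hξpos : 0 < ξ := lt_trans (half_pos hx) hξ.1
  have hVle : V (x / 2) ≤ V x :=
    (hVmono (le_of_lt (half_pos hx)) (le_of_lt hx) (half_lt_self hx)).le
  have hd : 0 ≤ deriv V ξ := by
    nlinarith [hξ.1, hξ.2, heq, half_lt_self hx]
  exact le_trans hd (hV'mono hξpos hx hξ.2.le)

lemma derivV_pos (hVmono : StrictMonoOn V (Ici 0))
    (hVd1 : ∀ x : ℝ, 0 < x → DifferentiableAt ℝ V x)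
    (hV'mono : MonotoneOn (deriv V) (Ioi 0)) {x : ℝ} (hx : 1 < x) :
    0 < deriv V x := by
  obtain ⟨ξ, hξ, heq⟩ := slope_mvt hVd1 one_pos hx
  have hξpos : 0 < ξ := lt_trans one_pos hξ.1
  have hVlt : V 1 < V x := hVmono (by norm_num) (by linarith : (0:ℝ) ≤ x) hx
  have hd : 0 < deriv V ξ := by
    nlinarith [hξ.1, hξ.2, heq]
  exact lt_of_lt_of_le hd (hV'mono hξpos (lt_trans one_pos hx) hξ.2.le)

end Deriv

/-- Lemma 5.5: under the GI/G/1-type setup with `σ < 0`,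
`σ_N < 0`, `L = MN`, and constants `κ, ε, δ0, K0, K` satisfying conditions
(1)–(3), one has, componentwise for all `k ≥ K + 1`,
`Σ_ℓ P_N^M(k;ℓ) V(ℓ) e − V(k) e ≤ −κ V'(k) e`. -/
theorem gig1_drift_inequality (d : ℕ) (hd : 0 < d)
    (A : ℤ → Fin d → Fin d → ℝ) (Bm : ℕ → Fin d → Fin d → ℝ)
    (hAnn : ∀ k i j, 0 ≤ A k i j) (hBnn : ∀ l i j, 0 ≤ Bm l i j)
    -- the GI/G/1-type transition probability matrix P
    (p : S d → S d → ℝ)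
    (hpB : ∀ (l : ℕ) (i j : Fin d), p (0, i) (l, j) = Bm l i j)
    (hp0 : ∀ (k : ℕ) (i j : Fin d),
      p (k + 1, i) (0, j) = ∑' m : ℕ, A (-((k : ℤ) + 1) - (m : ℤ)) i j)
    (hpA : ∀ (k l : ℕ) (i j : Fin d),
      p (k + 1, i) (l + 1, j) = A ((l : ℤ) - (k : ℤ)) i j)
    (hp : IsStochastic p) (hbm : BlockMonotone p) (hirr : ChainIrreducible p)
    -- A is an irreducible stochastic matrix with unique stationary vector ϖ
    (Asum : Fin d → Fin d → ℝ) (hAsum : ∀ i j, Asum i j = ∑' k : ℤ, A k i j)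
    (hAstoch : ∀ i, (∑ j : Fin d, Asum i j) = 1)
    (hAirr : ∀ i j, ∃ n : ℕ, 0 < finMatPow Asum n i j)
    (ϖ : Fin d → ℝ) (hϖnn : ∀ i, 0 ≤ ϖ i) (hϖ1 : (∑ i : Fin d, ϖ i) = 1)
    (hϖstat : ∀ j, (∑ i : Fin d, ϖ i * Asum i j) = ϖ j)
    (hϖuniq : ∀ ϖ' : Fin d → ℝ, (∀ i, 0 ≤ ϖ' i) → (∑ i : Fin d, ϖ' i) = 1 →
        (∀ j, (∑ i : Fin d, ϖ' i * Asum i j) = ϖ' j) → ϖ' = ϖ)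
    -- σ < 0 and σ_N < 0
    (hσ : (∑ i : Fin d, ϖ i * ∑' k : ℤ, (k : ℝ) * ∑ j : Fin d, A k i j) < 0)
    (N : ℕ) (hN : 1 ≤ N)
    (hσN : (∑ i : Fin d, ϖ i * ∑' k : ℤ, (k : ℝ) * ∑ j : Fin d, ANfam A N k i j) < 0)
    (M : ℕ) (hM : 1 ≤ M)
    -- the function V
    (α : ℝ) (hα0 : 0 ≤ α) (hα1 : α < 1)
    (V : ℝ → ℝ) (hV1 : ∀ x : ℝ, 0 ≤ x → 1 ≤ V x)
    (hVmono : StrictMonoOn V (Ici 0)) (hVconv : ConvexOn ℝ (Ici 0) V)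
    (hVd1 : ∀ x : ℝ, 0 < x → DifferentiableAt ℝ V x)
    (hVd2 : ∀ x : ℝ, 0 < x → DifferentiableAt ℝ (deriv V) x)
    (hV'mono : MonotoneOn (deriv V) (Ioi 0))
    -- the fixed constants and conditions (1)–(3)
    (κ ε δ0 : ℝ) (hκ : 0 < κ) (hε0 : 0 < ε) (hε1 : ε < 1) (hδ0 : 0 < δ0)
    (K0 K : ℕ) (hK0 : M * N ≤ K0) (hK : K0 ≤ K)
    (h1 : ∀ i : Fin d,
      (1 - ε) * (∑' l : ℤ, if -((M * N : ℕ) : ℤ) ≤ l then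
          (l : ℝ) * ∑ j : Fin d, convZ (ANfam A N) M l i j else 0)
        + 2 * ε * (∑' l : ℕ, (l : ℝ) * ∑ j : Fin d, convZ (ANfam A N) M (l : ℤ) i j)
        ≤ -(2 * κ))
    (h2 : ∀ k : ℕ, K0 + 1 ≤ k →
      deriv V ((k : ℝ) + δ0 * (k : ℝ) ^ (1 - α)) ≤ (1 + ε) * deriv V (k : ℝ) ∧
      (1 - ε) * deriv V (k : ℝ) ≤ deriv V ((k : ℝ) - ((M * N : ℕ) : ℝ)))
    (h3 : ∀ k : ℕ, K + 1 ≤ k → ∀ i : Fin d,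
      (deriv V (k : ℝ))⁻¹ *
          (∑' l : ℕ, if Int.floor (δ0 * (k : ℝ) ^ (1 - α)) < (l : ℤ) then
            V ((k : ℝ) + (l : ℝ)) * ∑ j : Fin d, convZ (ANfam A N) M (l : ℤ) i j else 0)
        ≤ κ) :
    ∀ k : ℕ, K + 1 ≤ k → ∀ i : Fin d,
      (∑' l : ℕ, (∑ j : Fin d, matpow (PNmat A Bm N) M (k, i) (l, j)) * V (l : ℝ))
          - V (k : ℝ)
        ≤ -(κ * deriv V (k : ℝ)) := by
  intro k hk i
  classical
  -- basic numbers
  have hL1 : 1 ≤ M * N := Nat.one_le_iff_ne_zero.2 (by positivity)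
  have hkL : M * N + 1 ≤ k := by omega
  have hk0 : K0 + 1 ≤ k := by omega
  have hk2 : 2 ≤ k := by omega
  -- structural facts
  have hPnn := PNmat_nonneg hAnn hBnn N
  have hPps := PNrow_hasSum hAnn hpB hp0 hpA hp.1 hp.2 N hN
  have hconv := matpow_eq_convZ (Bm := Bm) hN hAnn hPnn hPps M k (by omega)
  set c : ℤ → ℝ := fun q => ∑ j, convZ (ANfam A N) M q i j with hcdef
  have hceq : ∀ q : ℤ, (∑ j, convZ (ANfam A N) M q i j) = c q := fun q => rfl
  have hcnn : ∀ q, 0 ≤ c q := fun q =>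
    Finset.sum_nonneg fun j _ => convZ_nonneg (ANfam_nonneg hAnn N) M q i j
  have hczero : ∀ q : ℤ, q < -((M * N : ℕ) : ℤ) → c q = 0 := by
    intro q hq
    exact Finset.sum_eq_zero fun j _ =>
      convZ_eq_zero (fun r hr i' j' => ANfam_eq_zero hr i' j') M q hq i j
  -- row sums of the M-step matrix
  have hmp := matpow_hasSum hPnn hPps M (k, i)
  have hcrowN : HasSum (fun l : ℕ => c ((l : ℤ) - k)) 1 := by
    refine hmp.prod_fiberwise fun l => ?_
    have hfin := hasSum_fintype (fun j => matpow (PNmat A Bm N) M (k, i) (l, j))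
    have heq : (∑ j, matpow (PNmat A Bm N) M (k, i) (l, j)) = c ((l : ℤ) - k) :=
      Finset.sum_congr rfl fun j _ => hconv l i j
    rwa [heq] at hfin
  have hcrow : HasSum c 1 := by
    refine (Function.Injective.hasSum_iff (g := fun l : ℕ => (l : ℤ) - k)
      (fun a b hab => by
        have : (a : ℤ) - k = (b : ℤ) - k := hab
        omega)
      (fun q hq => ?_)).1 hcrowN
    refine hczero q ?_
    have hqk : q < -(k : ℤ) := by
      by_contra hc
      exact hq ⟨(q + k).toNat, by beta_reduce; omega⟩
    have : ((M * N : ℕ) : ℤ) < k := by exact_mod_cast (by omega : M * N < k)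
    omega
  -- rewrite the goal sum
  have hgoal : (∑' l : ℕ, (∑ j, matpow (PNmat A Bm N) M (k, i) (l, j)) * V (l : ℝ))
      = ∑' l : ℕ, c ((l : ℤ) - k) * V (l : ℝ) :=
    tsum_congr fun l => by
      rw [Finset.sum_congr rfl fun j _ => hconv l i j]
  rw [hgoal]
  -- derivative facts
  have hkR : (2 : ℝ) ≤ (k : ℝ) := by exact_mod_cast hk2
  have hkLR : ((M * N : ℕ) : ℝ) + 1 ≤ (k : ℝ) := by exact_mod_cast hkL
  have hL1R : (1 : ℝ) ≤ ((M * N : ℕ) : ℝ) := by exact_mod_cast hL1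
  have hdVpos : 0 < deriv V (k : ℝ) :=
    derivV_pos hVmono hVd1 hV'mono (by linarith)
  have hdVnn : 0 ≤ deriv V (k : ℝ) := hdVpos.le
  have h2k := h2 k hk0
  -- κ bound via condition (1)
  have h1i := h1 i
  simp only [hceq] at h1i
  have hT2nn : (0 : ℝ) ≤ ∑' l : ℕ, (l : ℝ) * c (l : ℤ) :=
    tsum_nonneg fun l => mul_nonneg (by positivity) (hcnn _)
  have hf1summ : Summable (fun q : ℤ =>
      if -((M * N : ℕ) : ℤ) ≤ q then (q : ℝ) * c q else 0) := by
    by_contra hns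
    rw [tsum_eq_zero_of_not_summable hns] at h1i
    nlinarith [mul_nonneg (le_of_lt hε0) hT2nn]
  have hlceq : (fun q : ℤ => (q : ℝ) * c q)
      = fun q : ℤ => if -((M * N : ℕ) : ℤ) ≤ q then (q : ℝ) * c q else 0 := by
    funext q
    by_cases hq : -((M * N : ℕ) : ℤ) ≤ q
    · rw [if_pos hq]
    · rw [if_neg hq, hczero q (by omega), mul_zero]
  have hlc_summ : Summable (fun q : ℤ => (q : ℝ) * c q) := by
    rw [hlceq]; exact hf1summ
  have hT1_ge : -((M * N : ℕ) : ℝ)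
      ≤ ∑' q : ℤ, (if -((M * N : ℕ) : ℤ) ≤ q then (q : ℝ) * c q else 0) := by
    have hs : HasSum (fun q : ℤ => -((M * N : ℕ) : ℝ) * c q) (-((M * N : ℕ) : ℝ)) := by
      simpa using hcrow.mul_left (-((M * N : ℕ) : ℝ))
    rw [← hs.tsum_eq]
    refine Summable.tsum_le_tsum (fun q => ?_) hs.summable hf1summ
    by_cases hq : -((M * N : ℕ) : ℤ) ≤ q
    · rw [if_pos hq]
      apply mul_le_mul_of_nonneg_right _ (hcnn q)
      exact_mod_cast hq
    · rw [if_neg hq, hczero q (by omega), mul_zero]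
  have hκL : 2 * κ ≤ (1 - ε) * ((M * N : ℕ) : ℝ) := by
    have hmul := mul_le_mul_of_nonneg_left hT1_ge (by linarith : (0:ℝ) ≤ 1 - ε)
    nlinarith [mul_nonneg (le_of_lt hε0) hT2nn]
  -- the two cases
  by_cases hsum : Summable (fun l : ℕ => c ((l : ℤ) - k) * V (l : ℝ))
  · -- summable case
    -- transfer to ℤ
    set g : ℤ → ℝ := fun q => c q * V ((k : ℝ) + (q : ℝ)) with hgdef
    have hinjk : Function.Injective (fun l : ℕ => (l : ℤ) - k) := by
      intro a b hab
      have : (a : ℤ) - k = (b : ℤ) - k := hab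
      omega
    have hoffk : ∀ q : ℤ, q ∉ Set.range (fun l : ℕ => (l : ℤ) - k) → g q = 0 := by
      intro q hq
      have hqk : q < -(k : ℤ) := by
        by_contra hc
        exact hq ⟨(q + k).toNat, by beta_reduce; omega⟩
      have : ((M * N : ℕ) : ℤ) < k := by exact_mod_cast (by omega : M * N < k)
      simp only [hgdef]
      rw [hczero q (by omega), zero_mul]
    have hcomp : (fun l : ℕ => g ((l : ℤ) - k)) = fun l : ℕ => c ((l : ℤ) - k) * V (l : ℝ) := by
      funext l
      simp only [hgdef]
      congr 2
      push_cast
      ring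
    have hgsum : Summable g := by
      refine (Function.Injective.summable_iff hinjk hoffk).1 ?_
      show Summable ((fun q => g q) ∘ fun l : ℕ => (l : ℤ) - k)
      have : ((fun q => g q) ∘ fun l : ℕ => (l : ℤ) - k)
          = fun l : ℕ => c ((l : ℤ) - k) * V (l : ℝ) := hcomp
      rw [this]
      exact hsum
    have hgtsum : (∑' l : ℕ, c ((l : ℤ) - k) * V (l : ℝ)) = ∑' q : ℤ, g q := by
      rw [← hcomp]
      exact inj_tsum_eq _ hinjk hoffk
    rw [hgtsum]
    -- subtract V k
    have hcVk : HasSum (fun q : ℤ => c q * V (k : ℝ)) (V (k : ℝ)) := by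
      simpa using hcrow.mul_right (V (k : ℝ))
    have hsub : (∑' q : ℤ, g q) - V (k : ℝ)
        = ∑' q : ℤ, (g q - c q * V (k : ℝ)) := by
      rw [Summable.tsum_sub hgsum hcVk.summable, hcVk.tsum_eq]
    rw [hsub]
    -- the three bounding functions
    set T : ℤ := Int.floor (δ0 * (k : ℝ) ^ (1 - α)) with hTdef
    have hT0 : 0 ≤ T := Int.floor_nonneg.2 (by positivity)
    have hTle : (T : ℝ) ≤ δ0 * (k : ℝ) ^ (1 - α) := Int.floor_le _
    set u1 : ℤ → ℝ := fun q =>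
      (1 - ε) * deriv V (k : ℝ) * (if q < 0 then (q : ℝ) * c q else 0) with hu1def
    set u2 : ℤ → ℝ := fun q =>
      (1 + ε) * deriv V (k : ℝ) * (if 0 ≤ q ∧ q ≤ T then (q : ℝ) * c q else 0) with hu2def
    set u3 : ℤ → ℝ := fun q =>
      if T < q then V ((k : ℝ) + (q : ℝ)) * c q else 0 with hu3def
    -- summabilities
    have hindsum : ∀ (P : ℤ → Prop) [DecidablePred P],
        Summable (fun q : ℤ => if P q then (q : ℝ) * c q else 0) := by
      intro P _
      have h := hlc_summ.indicator {q | P q}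
      refine h.congr fun q => ?_
      by_cases hP : P q <;>
        simp [Set.indicator_apply, Set.mem_setOf_eq, hP]
    have hu1sum : Summable u1 := by
      rw [hu1def]
      exact (hindsum (fun q => q < 0)).mul_left _
    have hu2sum : Summable u2 := by
      rw [hu2def]
      exact (hindsum (fun q => 0 ≤ q ∧ q ≤ T)).mul_left _
    have hgnn : ∀ q, 0 ≤ g q := by
      intro q
      by_cases hq : q < -((M * N : ℕ) : ℤ)
      · simp only [hgdef]; rw [hczero q hq, zero_mul]
      · refine mul_nonneg (hcnn q) ?_
        have hx : (1 : ℝ) ≤ (k : ℝ) + (q : ℝ) := by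
          have h1 : (1 : ℤ) ≤ (k : ℤ) + q := by
            have : ((M * N : ℕ) : ℤ) < k := by exact_mod_cast (by omega : M * N < k)
            omega
          have : ((1 : ℤ) : ℝ) ≤ (((k : ℤ) + q : ℤ) : ℝ) := by exact_mod_cast h1
          push_cast at this
          linarith
        linarith [hV1 ((k : ℝ) + (q : ℝ)) (by linarith)]
    have hu3nn : ∀ q, 0 ≤ u3 q := by
      intro q
      simp only [hu3def]
      split
      · rename_i hTq
        refine mul_nonneg ?_ (hcnn q)
        have hx : (0 : ℝ) ≤ (k : ℝ) + (q : ℝ) := by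
          have h1 : (0 : ℤ) ≤ (k : ℤ) + q := by omega
          have : ((0 : ℤ) : ℝ) ≤ (((k : ℤ) + q : ℤ) : ℝ) := by exact_mod_cast h1
          push_cast at this
          linarith
        linarith [hV1 ((k : ℝ) + (q : ℝ)) hx]
      · rfl
    have hu3le : ∀ q, u3 q ≤ g q := by
      intro q
      simp only [hu3def, hgdef]
      split
      · rw [mul_comm]
      · exact hgnn q
    have hu3sum : Summable u3 := Summable.of_nonneg_of_le hu3nn hu3le hgsum
    -- pointwise bound
    have hptwise : ∀ q : ℤ, g q - c q * V (k : ℝ) ≤ u1 q + u2 q + u3 q := by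
      intro q
      simp only [hgdef, hu1def, hu2def, hu3def]
      rcases lt_trichotomy q 0 with hq0 | hq0 | hq0
      · -- negative q
        rw [if_pos hq0, if_neg (by omega), if_neg (by omega)]
        by_cases hcq : c q = 0
        · rw [hcq]; simp
        · have hqL : -((M * N : ℕ) : ℤ) ≤ q := by
            by_contra hc
            exact hcq (hczero q (by omega))
          have hqR : -((M * N : ℕ) : ℝ) ≤ (q : ℝ) := by exact_mod_cast hqL
          have hqneg : (q : ℝ) ≤ -1 := by exact_mod_cast (by omega : q ≤ (-1 : ℤ))
          obtain ⟨ξ, hξ, heq⟩ := slope_mvt hVd1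
            (a := (k : ℝ) + (q : ℝ)) (b := (k : ℝ)) (by linarith) (by linarith)
          have hξpos : 0 < ξ := by linarith [hξ.1]
          have hmem1 : ((k : ℝ) - ((M * N : ℕ) : ℝ)) ∈ Ioi (0:ℝ) := by
            simp only [mem_Ioi]; linarith
          have hmono1 := hV'mono hmem1 (mem_Ioi.mpr hξpos) (by linarith [hξ.1])
          have hd2 := h2k.2
          have h' : V ((k : ℝ) + (q : ℝ)) - V (k : ℝ) = deriv V ξ * (q : ℝ) := by
            linear_combination (-1 : ℝ) * heq
          have heq3 : c q * V ((k : ℝ) + (q : ℝ)) - c q * V (k : ℝ)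
              = ((q : ℝ) * c q) * deriv V ξ := by
            linear_combination (c q) * h'
          have hqcneg : (q : ℝ) * c q ≤ 0 := by nlinarith [hcnn q, hqneg]
          have key := mul_le_mul_of_nonpos_left (le_trans hd2 hmono1) hqcneg
          linarith [heq3, key]
      · -- q = 0
        subst hq0
        rw [if_neg (by omega), if_pos ⟨le_refl (0:ℤ), hT0⟩, if_neg (by omega)]
        norm_num
      · -- positive q
        rw [if_neg (by omega)]
        by_cases hqT : q ≤ T
        · rw [if_pos ⟨by omega, hqT⟩, if_neg (by omega)]
          by_cases hcq : c q = 0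
          · rw [hcq]; simp
          · have hq1 : (1 : ℝ) ≤ (q : ℝ) := by exact_mod_cast (by omega : (1:ℤ) ≤ q)
            obtain ⟨ξ, hξ, heq⟩ := slope_mvt hVd1
              (a := (k : ℝ)) (b := (k : ℝ) + (q : ℝ)) (by linarith) (by linarith)
            have hqTR : (q : ℝ) ≤ (T : ℝ) := by exact_mod_cast hqT
            have hrp : (0:ℝ) ≤ (k : ℝ) ^ (1 - α) :=
              Real.rpow_nonneg (by linarith) (1 - α)
            have hmemξ : ξ ∈ Ioi (0:ℝ) := mem_Ioi.mpr (by linarith [hξ.1])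
            have hmemy : ((k : ℝ) + δ0 * (k : ℝ) ^ (1 - α)) ∈ Ioi (0:ℝ) :=
              mem_Ioi.mpr (by nlinarith)
            have hmono1 := hV'mono hmemξ hmemy (by linarith [hξ.2, hqTR, hTle])
            have hd1 := h2k.1
            have h' : V ((k : ℝ) + (q : ℝ)) - V (k : ℝ) = deriv V ξ * (q : ℝ) := by
              linear_combination heq
            have heq3 : c q * V ((k : ℝ) + (q : ℝ)) - c q * V (k : ℝ)
                = ((q : ℝ) * c q) * deriv V ξ := by
              linear_combination (c q) * h'
            have hqcnn : 0 ≤ (q : ℝ) * c q := mul_nonneg (by linarith) (hcnn q)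
            have key := mul_le_mul_of_nonneg_left (le_trans hmono1 hd1) hqcnn
            linarith [heq3, key]
        · rw [if_neg (by intro hc; exact hqT hc.2), if_pos (by omega)]
          have hx : (0 : ℝ) ≤ (k : ℝ) + (q : ℝ) := by
            have : (0 : ℝ) ≤ (q : ℝ) := by exact_mod_cast (by omega : (0:ℤ) ≤ q)
            linarith
          have hVk1 : 1 ≤ V (k : ℝ) := hV1 _ (by linarith)
          have := mul_nonneg (hcnn q) (by linarith : (0:ℝ) ≤ V (k:ℝ))
          nlinarith [this]
    -- summability of LHS and combination
    have hDsum : Summable (fun q : ℤ => g q - c q * V (k : ℝ)) :=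
      hgsum.sub hcVk.summable
    have hUsum : Summable (fun q : ℤ => u1 q + u2 q + u3 q) :=
      (hu1sum.add hu2sum).add hu3sum
    have hmain := Summable.tsum_le_tsum hptwise hDsum hUsum
    rw [Summable.tsum_add (hu1sum.add hu2sum) hu3sum, Summable.tsum_add hu1sum hu2sum] at hmain
    -- evaluate the u-sums
    have hSm_le : (∑' q : ℤ, (if 0 ≤ q ∧ q ≤ T then (q : ℝ) * c q else 0))
        ≤ ∑' q : ℤ, (if 0 ≤ q then (q : ℝ) * c q else 0) := by
      refine Summable.tsum_le_tsum (fun q => ?_) (hindsum _) (hindsum _)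
      by_cases hq : 0 ≤ q ∧ q ≤ T
      · rw [if_pos hq, if_pos hq.1]
      · rw [if_neg hq]
        by_cases hq0 : 0 ≤ q
        · rw [if_pos hq0]
          exact mul_nonneg (by exact_mod_cast hq0) (hcnn q)
        · rw [if_neg hq0]
    have hT1split : (∑' q : ℤ, (if -((M * N : ℕ) : ℤ) ≤ q then (q : ℝ) * c q else 0))
        = (∑' q : ℤ, (if q < 0 then (q : ℝ) * c q else 0))
          + ∑' q : ℤ, (if 0 ≤ q then (q : ℝ) * c q else 0) := by
      rw [← Summable.tsum_add (hindsum _) (hindsum _)]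
      refine tsum_congr fun q => ?_
      beta_reduce
      by_cases hq : q < 0
      · rw [if_pos hq, if_neg (show ¬(0:ℤ) ≤ q by omega), add_zero]
        by_cases hqL : -((M * N : ℕ) : ℤ) ≤ q
        · rw [if_pos hqL]
        · rw [if_neg hqL, hczero q (by omega), mul_zero]
      · rw [if_neg hq, if_pos (show (0:ℤ) ≤ q by omega),
          if_pos (show -((M * N : ℕ) : ℤ) ≤ q by omega), zero_add]
    have hT2cast : (∑' q : ℤ, (if 0 ≤ q then (q : ℝ) * c q else 0))
        = ∑' l : ℕ, (l : ℝ) * c (l : ℤ) := by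
      rw [← inj_tsum_eq (f := fun q : ℤ => if 0 ≤ q then (q : ℝ) * c q else 0)
        (fun l : ℕ => (l : ℤ))
        (fun a b hab => by
          have : (a : ℤ) = (b : ℤ) := hab
          exact_mod_cast this)
        (fun q hq => if_neg fun hq0 => hq ⟨q.toNat, by beta_reduce; omega⟩)]
      refine tsum_congr fun l => ?_
      beta_reduce
      rw [if_pos (by positivity)]
      norm_num
    -- bound on u1 + u2
    have hu12 : (∑' q, u1 q) + (∑' q, u2 q) ≤ -(2 * κ) * deriv V (k : ℝ) := by
      have hcomb : (1 - ε) * (∑' q : ℤ, (if q < 0 then (q : ℝ) * c q else 0))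
          + (1 + ε) * (∑' q : ℤ, (if 0 ≤ q ∧ q ≤ T then (q : ℝ) * c q else 0))
          ≤ -(2 * κ) := by
        rw [hT1split, hT2cast] at h1i
        have e1 := mul_le_mul_of_nonneg_left hSm_le (by linarith : (0:ℝ) ≤ 1 + ε)
        rw [hT2cast] at e1
        linarith
      have hc2 := mul_le_mul_of_nonneg_right hcomb hdVnn
      simp only [hu1def, hu2def]
      rw [tsum_mul_left, tsum_mul_left]
      nlinarith [hc2]
    -- bound on u3
    have hu3bound : (∑' q, u3 q) ≤ κ * deriv V (k : ℝ) := by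
      have h3i := h3 k hk i
      simp only [hceq] at h3i
      rw [← hTdef] at h3i
      have hHeq : (∑' q : ℤ, u3 q)
          = ∑' l : ℕ, (if T < (l : ℤ) then V ((k : ℝ) + (l : ℝ)) * c (l : ℤ) else 0) := by
        rw [← inj_tsum_eq (f := u3) (fun l : ℕ => (l : ℤ))
          (fun a b hab => by
            have : (a : ℤ) = (b : ℤ) := hab
            exact_mod_cast this)
          (fun q hq => by
            simp only [hu3def]
            exact if_neg fun hTq => hq ⟨q.toNat, by beta_reduce; omega⟩)]
        refine tsum_congr fun l => ?_
        simp only [hu3def]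
        norm_num
      rw [hHeq]
      have hmul := mul_le_mul_of_nonneg_left h3i hdVnn
      rw [← mul_assoc, mul_inv_cancel₀ (ne_of_gt hdVpos), one_mul] at hmul
      linarith [hmul]
    have hfin : -(2 * κ) * deriv V (k : ℝ) + κ * deriv V (k : ℝ)
        = -(κ * deriv V (k : ℝ)) := by ring
    linarith [hmain, hu12, hu3bound]
  · -- non-summable case
    rw [tsum_eq_zero_of_not_summable hsum]
    -- need : κ * deriv V k ≤ V k
    obtain ⟨ξ, hξ, heq⟩ := slope_mvt hVd1
      (a := (k : ℝ) - ((M * N : ℕ) : ℝ)) (b := (k : ℝ)) (by linarith) (by linarith)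
    have hξpos : 0 < ξ := by
      have := hξ.1; linarith
    have hmono := hV'mono (by simp only [mem_Ioi]; linarith) (mem_Ioi.mpr hξpos) hξ.1.le
    have hVkL1 : 1 ≤ V ((k : ℝ) - ((M * N : ℕ) : ℝ)) := hV1 _ (by linarith)
    have hd2 := h2k.2
    have hb : (M * N : ℕ) ≤ (M * N : ℕ) := le_refl _
    -- V k - V (k - L) = deriv V ξ * L ≥ (1-ε) dV * L ≥ 2 κ dV
    have hstep : 2 * κ * deriv V (k : ℝ) ≤ V (k : ℝ) - V ((k : ℝ) - ((M * N : ℕ) : ℝ)) := by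
      have hL0 : (0 : ℝ) ≤ ((M * N : ℕ) : ℝ) := by positivity
      nlinarith [heq, hmono, hd2, hdVnn, hκL]
    nlinarith [hVkL1, hdVnn, hκ.le, hstep, mul_nonneg hκ.le hdVnn]


end MasuTrunc
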